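/- For any graphs G and H, m_{G□H}[0,1) ≤ m_G[0,1) · m_H[0,1), where G□H is the Cartesian product. Consequently, for every k ≥ 1, m_{G^k}[0,1) ≤ (m_G[0,1))^k. -/

import Mathlib

open scoped Classical

/-- The `i`-th Laplacian eigenvalue of `G` (in the unsorted indexing given by
the spectral theorem applied to the Laplacian matrix). -/
noncomputable def lapEig {V : Type*} [Fintype V] [DecidableEq V] (G : SimpleGraph V) : V → ℝ :=
  (G.posSemidef_lapMatrix (R := ℝ)).isHermitian.eigenvalues

/-- The number of Laplacian eigenvalues of `G` (with multiplicity) satisfying `P`. -/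
noncomputable def mCount {V : Type*} [Fintype V] [DecidableEq V] (G : SimpleGraph V)
    (P : ℝ → Prop) : ℕ :=
  (Finset.univ.filter fun i => P (lapEig G i)).card

/-- `S` is a dominating set of `G`. -/
def IsDomSet {V : Type*} (G : SimpleGraph V) (S : Finset V) : Prop :=
  ∀ v ∉ S, ∃ u ∈ S, G.Adj u v

/-- The domination number of `G`. -/
noncomputable def domNum {V : Type*} [Fintype V] (G : SimpleGraph V) : ℕ :=
  sInf {k | ∃ S : Finset V, IsDomSet G S ∧ S.card = k}
/-- The $k$-fold Cartesian power of a graph $G$. -/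
def cartPow {V : Type*} (G : SimpleGraph V) (k : ℕ) : SimpleGraph (Fin k → V) where
  Adj f g := ∃ i, G.Adj (f i) (g i) ∧ ∀ j, j ≠ i → f j = g j
  symm := by
    constructor
    rintro f g ⟨i, hadj, hfix⟩
    exact ⟨i, hadj.symm, fun j hj => (hfix j hj).symm⟩
  loopless := by
    constructor
    rintro f ⟨i, hadj, -⟩
    exact G.loopless.irrefl _ hadj


open Matrix Polynomial Finset

section CharpolyAux

variable {n : Type*} [Fintype n] [DecidableEq n]

lemma my_charmatrix_eq {R : Type*} [CommRing R] (M : Matrix n n R) :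
    charmatrix M = (X : R[X]) • (1 : Matrix n n R[X]) - M.map C := by
  ext i j
  by_cases h : i = j <;>
    simp [charmatrix_apply, Matrix.diagonal_apply, Matrix.one_apply, Matrix.map_apply, h]

lemma my_charpoly_conj {R : Type*} [CommRing R] (U M W : Matrix n n R)
    (h1 : U * W = 1) : (U * M * W).charpoly = M.charpoly := by
  have key : charmatrix (U * M * W) = (U.map C) * charmatrix M * (W.map C) := by
    rw [my_charmatrix_eq, my_charmatrix_eq, Matrix.mul_sub, Matrix.sub_mul]
    congr 1
    · rw [Matrix.mul_smul, Matrix.mul_one, Matrix.smul_mul, ← Matrix.map_mul, h1,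
        Matrix.map_one _ (map_zero C) (map_one C)]
    · rw [← Matrix.map_mul, ← Matrix.map_mul]
  have hdet : det (U.map C) * det (W.map C) = 1 := by
    rw [← det_mul, ← Matrix.map_mul, h1, Matrix.map_one _ (map_zero C) (map_one C), det_one]
  rw [Matrix.charpoly, key, det_mul, det_mul, Matrix.charpoly]
  calc det (U.map C) * det (charmatrix M) * det (W.map C)
      = det (U.map C) * det (W.map C) * det (charmatrix M) := by ring
    _ = det (charmatrix M) := by rw [hdet, one_mul]

lemma my_charpoly_diagonal {R : Type*} [CommRing R] (d : n → R) :
    (Matrix.diagonal d).charpoly = ∏ i, (X - C (d i)) := by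
  have : charmatrix (Matrix.diagonal d) = Matrix.diagonal fun i => (X : R[X]) - C (d i) := by
    ext i j
    by_cases h : i = j <;> simp [charmatrix_apply, Matrix.diagonal_apply, h]
  rw [Matrix.charpoly, this, det_diagonal]

lemma my_charpoly_herm {A : Matrix n n ℝ} (hA : A.IsHermitian) :
    A.charpoly = ∏ i, (X - C (hA.eigenvalues i)) := by
  have hU : (hA.eigenvectorUnitary : Matrix n n ℝ) * star (hA.eigenvectorUnitary : Matrix n n ℝ)
      = 1 := Matrix.mem_unitaryGroup_iff.mp hA.eigenvectorUnitary.2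
  calc A.charpoly
      = ((hA.eigenvectorUnitary : Matrix n n ℝ)
          * Matrix.diagonal (RCLike.ofReal ∘ hA.eigenvalues)
          * star (hA.eigenvectorUnitary : Matrix n n ℝ)).charpoly := by
        rw [← Unitary.conjStarAlgAut_apply (S := ℝ), ← hA.spectral_theorem]
    _ = (Matrix.diagonal (RCLike.ofReal ∘ hA.eigenvalues)).charpoly :=
        my_charpoly_conj _ _ _ hU
    _ = ∏ i, (X - C (hA.eigenvalues i)) := by
        rw [my_charpoly_diagonal]
        simp

lemma my_roots_charpoly {A : Matrix n n ℝ} (hA : A.IsHermitian) :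
    A.charpoly.roots = Finset.univ.val.map hA.eigenvalues := by
  rw [my_charpoly_herm hA, Finset.prod_eq_multiset_prod]
  have : Multiset.map (fun i => X - C (hA.eigenvalues i)) Finset.univ.val
      = (Finset.univ.val.map hA.eigenvalues).map (fun a => X - C a) := by
    rw [Multiset.map_map]
    rfl
  rw [this, roots_multiset_prod_X_sub_C]

lemma my_eig_multiset_eq {A : Matrix n n ℝ} (hA : A.IsHermitian) (U : Matrix n n ℝ) (d : n → ℝ)
    (h1 : U * star U = 1) (hAe : A = U * Matrix.diagonal d * star U) :
    Finset.univ.val.map hA.eigenvalues = Finset.univ.val.map d := by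
  have h3 : A.charpoly = ∏ i, (X - C (d i)) := by
    rw [hAe, my_charpoly_conj _ _ _ h1, my_charpoly_diagonal]
  have h4 := my_roots_charpoly hA
  rw [h3, Finset.prod_eq_multiset_prod] at h4
  have h5 : Multiset.map (fun i => X - C (d i)) Finset.univ.val
      = (Finset.univ.val.map d).map (fun a => X - C a) := by
    rw [Multiset.map_map]; rfl
  rw [h5, roots_multiset_prod_X_sub_C] at h4
  exact h4.symm

end CharpolyAux

open scoped Classical
open Matrix Polynomial Finset


open Kronecker in
lemma my_lapMatrix_boxProd {α β : Type} [Fintype α] [DecidableEq α] [Fintype β] [DecidableEq β]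
    (G : SimpleGraph α) (H : SimpleGraph β) :
    (G.boxProd H).lapMatrix ℝ =
      (G.lapMatrix ℝ) ⊗ₖ (1 : Matrix β β ℝ) + (1 : Matrix α α ℝ) ⊗ₖ (H.lapMatrix ℝ) := by
  ext ⟨a, b⟩ ⟨c, d⟩
  by_cases hac : a = c <;> by_cases hbd : b = d <;>
    simp [SimpleGraph.lapMatrix, SimpleGraph.degMatrix, Matrix.diagonal_apply,
      Matrix.one_apply, Matrix.kroneckerMap_apply, SimpleGraph.boxProd_adj,
      SimpleGraph.degree_boxProd, Prod.ext_iff, hac, hbd]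

open Kronecker in
lemma my_eig_boxProd {α β : Type} [Fintype α] [DecidableEq α] [Fintype β] [DecidableEq β]
    (G : SimpleGraph α) (H : SimpleGraph β) :
    Finset.univ.val.map (lapEig (G.boxProd H)) =
      (Finset.univ.val : Multiset (α × β)).map (fun p => lapEig G p.1 + lapEig H p.2) := by
  set hG := (G.posSemidef_lapMatrix (R := ℝ)).isHermitian with hGdef
  set hH := (H.posSemidef_lapMatrix (R := ℝ)).isHermitian with hHdef
  set U : Matrix α α ℝ := (hG.eigenvectorUnitary : Matrix α α ℝ) with hUdef
  set V : Matrix β β ℝ := (hH.eigenvectorUnitary : Matrix β β ℝ) with hVdef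
  have hU1 : U * star U = 1 := Matrix.mem_unitaryGroup_iff.mp hG.eigenvectorUnitary.2
  have hV1 : V * star V = 1 := Matrix.mem_unitaryGroup_iff.mp hH.eigenvectorUnitary.2
  have hstar : star (U ⊗ₖ V) = (star U) ⊗ₖ (star V) := by
    ext ⟨i, j⟩ ⟨k, l⟩
    simp [Matrix.star_apply, Matrix.kroneckerMap_apply]
  have hW1 : (U ⊗ₖ V) * star (U ⊗ₖ V) = 1 := by
    rw [hstar, ← Matrix.mul_kronecker_mul, hU1, hV1, Matrix.one_kronecker_one]
  have hGspec : G.lapMatrix ℝ = U * Matrix.diagonal hG.eigenvalues * star U := by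
    have := hG.spectral_theorem
    simpa using this
  have hHspec : H.lapMatrix ℝ = V * Matrix.diagonal hH.eigenvalues * star V := by
    have := hH.spectral_theorem
    simpa using this
  have key : (G.boxProd H).lapMatrix ℝ =
      (U ⊗ₖ V) * Matrix.diagonal (fun p : α × β => hG.eigenvalues p.1 + hH.eigenvalues p.2)
        * star (U ⊗ₖ V) := by
    have hdiag : Matrix.diagonal (fun p : α × β => hG.eigenvalues p.1 + hH.eigenvalues p.2)
        = (Matrix.diagonal hG.eigenvalues) ⊗ₖ (1 : Matrix β β ℝ)
          + (1 : Matrix α α ℝ) ⊗ₖ (Matrix.diagonal hH.eigenvalues) := by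
      rw [← Matrix.diagonal_one (n := β), ← Matrix.diagonal_one (n := α),
        Matrix.diagonal_kronecker_diagonal, Matrix.diagonal_kronecker_diagonal,
        Matrix.diagonal_add]
      simp
    rw [my_lapMatrix_boxProd, hdiag, hstar, Matrix.mul_add, Matrix.add_mul,
      ← Matrix.mul_kronecker_mul, ← Matrix.mul_kronecker_mul,
      ← Matrix.mul_kronecker_mul, ← Matrix.mul_kronecker_mul,
      Matrix.mul_one, Matrix.mul_one, hU1, hV1, ← hGspec, ← hHspec]
  exact my_eig_multiset_eq ((G.boxProd H).posSemidef_lapMatrix (R := ℝ)).isHermitian _ _ hW1 key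


lemma my_mCount_eq_countP {V : Type*} [Fintype V] [DecidableEq V] (G : SimpleGraph V)
    (P : ℝ → Prop) :
    mCount G P = Multiset.countP P (Finset.univ.val.map (lapEig G)) := by
  rw [Multiset.countP_map]
  rfl

lemma filter_card_congr {γ : Type*} (p : γ → Prop) (h1 h2 : DecidablePred p) (s : Finset γ) :
    (@Finset.filter γ p h1 s).card = (@Finset.filter γ p h2 s).card := by
  rw [Subsingleton.elim h1 h2]

lemma my_mCount_map {W V : Type*} [Fintype V] [DecidableEq V] [Fintype W] [DecidableEq W]
    (G : SimpleGraph V) (f : W → ℝ) (P : ℝ → Prop)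
    [DecidablePred fun w => P (f w)]
    (h : Finset.univ.val.map (lapEig G) = (Finset.univ.val : Multiset W).map f) :
    mCount G P = (Finset.univ.filter fun w => P (f w)).card := by
  rw [my_mCount_eq_countP, h, Multiset.countP_map]
  exact filter_card_congr _ _ _ _

lemma my_mCount_boxProd {α β : Type} [Fintype α] [DecidableEq α] [Fintype β] [DecidableEq β]
    (G : SimpleGraph α) (H : SimpleGraph β) :
    mCount (G.boxProd H) (fun x => 0 ≤ x ∧ x < 1) ≤
      mCount G (fun x => 0 ≤ x ∧ x < 1) * mCount H (fun x => 0 ≤ x ∧ x < 1) := by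
  rw [my_mCount_map (G.boxProd H) (fun p : α × β => lapEig G p.1 + lapEig H p.2) _
      (my_eig_boxProd G H),
    my_mCount_map G (lapEig G) _ rfl, my_mCount_map H (lapEig H) _ rfl]
  have hG0 : ∀ a, 0 ≤ lapEig G a := fun a =>
    (G.posSemidef_lapMatrix (R := ℝ)).eigenvalues_nonneg a
  have hH0 : ∀ b, 0 ≤ lapEig H b := fun b =>
    (H.posSemidef_lapMatrix (R := ℝ)).eigenvalues_nonneg b
  rw [← Finset.card_product]
  apply Finset.card_le_card
  intro p hp
  simp only [Finset.mem_filter, Finset.mem_product, Finset.mem_univ, true_and] at hp ⊢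
  have h1 := hG0 p.1
  have h2 := hH0 p.2
  exact ⟨⟨h1, by linarith [hp.2]⟩, ⟨h2, by linarith [hp.2]⟩⟩

lemma my_lapMatrix_reindex {α β : Type} [Fintype α] [DecidableEq α] [Fintype β] [DecidableEq β]
    (G : SimpleGraph α) (H : SimpleGraph β) (e : α ≃ β)
    (h : ∀ a b, H.Adj (e a) (e b) ↔ G.Adj a b) :
    H.lapMatrix ℝ = (Matrix.reindex e e) (G.lapMatrix ℝ) := by
  have hadj : ∀ x y, H.Adj x y ↔ G.Adj (e.symm x) (e.symm y) := by
    intro x y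
    rw [← h (e.symm x) (e.symm y), e.apply_symm_apply, e.apply_symm_apply]
  have hnbr : ∀ x, H.neighborFinset x = (G.neighborFinset (e.symm x)).map e.toEmbedding := by
    intro x
    ext y
    simp only [SimpleGraph.mem_neighborFinset, Finset.mem_map, Equiv.coe_toEmbedding]
    constructor
    · intro hy
      exact ⟨e.symm y, (hadj x y).mp hy, e.apply_symm_apply y⟩
    · rintro ⟨c, hc, rfl⟩
      rw [hadj, e.symm_apply_apply]
      exact hc
  have hdeg : ∀ x, H.degree x = G.degree (e.symm x) := by
    intro x
    rw [SimpleGraph.degree, SimpleGraph.degree, hnbr, Finset.card_map]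
  ext x y
  simp only [SimpleGraph.lapMatrix, Matrix.sub_apply, SimpleGraph.degMatrix,
    Matrix.diagonal_apply, SimpleGraph.adjMatrix_apply, Matrix.reindex_apply,
    Matrix.submatrix_apply]
  rw [hdeg, hadj]
  congr 1
  by_cases hxy : x = y
  · simp [hxy]
  · have : ¬ e.symm x = e.symm y := fun hc => hxy (by simpa using congrArg e hc)
    simp [hxy, this]

lemma my_eig_iso {α β : Type} [Fintype α] [DecidableEq α] [Fintype β] [DecidableEq β]
    (G : SimpleGraph α) (H : SimpleGraph β) (e : α ≃ β)
    (h : ∀ a b, H.Adj (e a) (e b) ↔ G.Adj a b) :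
    (Finset.univ.val : Multiset β).map (lapEig H) =
      (Finset.univ.val : Multiset α).map (lapEig G) := by
  have hcp : (H.lapMatrix ℝ).charpoly = (G.lapMatrix ℝ).charpoly := by
    rw [my_lapMatrix_reindex G H e h, Matrix.charpoly_reindex]
  have h1 := my_roots_charpoly (H.posSemidef_lapMatrix (R := ℝ)).isHermitian
  have h2 := my_roots_charpoly (G.posSemidef_lapMatrix (R := ℝ)).isHermitian
  rw [hcp, h2] at h1
  exact h1.symm

lemma my_mCount_iso {α β : Type} [Fintype α] [DecidableEq α] [Fintype β] [DecidableEq β]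
    (G : SimpleGraph α) (H : SimpleGraph β) (e : α ≃ β)
    (h : ∀ a b, H.Adj (e a) (e b) ↔ G.Adj a b) (P : ℝ → Prop) :
    mCount H P = mCount G P := by
  rw [my_mCount_eq_countP, my_mCount_eq_countP, my_eig_iso G H e h]


lemma my_cartPow_one {V : Type} [Fintype V] [DecidableEq V] (G : SimpleGraph V) :
    ∀ f g : Fin 1 → V, G.Adj (Equiv.funUnique (Fin 1) V f) (Equiv.funUnique (Fin 1) V g) ↔
      (cartPow G 1).Adj f g := by
  intro f g
  constructor
  · intro hadj
    exact ⟨default, hadj, fun j hj => absurd (Subsingleton.elim j default) hj⟩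
  · rintro ⟨i, hadj, -⟩
    have : i = default := Subsingleton.elim _ _
    rw [this] at hadj
    exact hadj

lemma my_cartPow_succ {V : Type} [Fintype V] [DecidableEq V] (G : SimpleGraph V) (k : ℕ) :
    ∀ f g : Fin (k + 1) → V,
      (G.boxProd (cartPow G k)).Adj ((Fin.consEquiv fun _ => V).symm f)
        ((Fin.consEquiv fun _ => V).symm g) ↔ (cartPow G (k + 1)).Adj f g := by
  intro f g
  simp only [Fin.consEquiv, Equiv.coe_fn_symm_mk, SimpleGraph.boxProd_adj]
  constructor
  · rintro (⟨hadj, htail⟩ | ⟨⟨i, hadj, hfix⟩, hhead⟩)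
    · refine ⟨0, hadj, fun j hj => ?_⟩
      rcases Fin.eq_zero_or_eq_succ j with rfl | ⟨j', rfl⟩
      · exact absurd rfl hj
      · exact congrFun htail j'
    · refine ⟨i.succ, hadj, fun j hj => ?_⟩
      rcases Fin.eq_zero_or_eq_succ j with rfl | ⟨j', rfl⟩
      · exact hhead
      · exact hfix j' (fun hc => hj (by rw [hc]))
  · rintro ⟨i, hadj, hfix⟩
    rcases Fin.eq_zero_or_eq_succ i with rfl | ⟨i', rfl⟩
    · exact Or.inl ⟨hadj, funext fun j => hfix j.succ (Fin.succ_ne_zero j)⟩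
    · exact Or.inr ⟨⟨i', hadj, fun j hj =>
        hfix j.succ (fun hc => hj (Fin.succ_injective _ hc))⟩, hfix 0 (Fin.succ_ne_zero i').symm⟩


/-- $m_{G \square H}[0,1) \le m_G[0,1) \cdot m_H[0,1)$, and consequently
$m_{G^k}[0,1) \le m_G[0,1)^k$ for all $k \ge 1$. -/
theorem mCount_boxProd_and_cartPow :
    (∀ {α β : Type} [Fintype α] [DecidableEq α] [Fintype β] [DecidableEq β]
      (G : SimpleGraph α) (H : SimpleGraph β),
      mCount (G.boxProd H) (fun x => 0 ≤ x ∧ x < 1) ≤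
        mCount G (fun x => 0 ≤ x ∧ x < 1) * mCount H (fun x => 0 ≤ x ∧ x < 1)) ∧
    (∀ {α : Type} [Fintype α] [DecidableEq α] (G : SimpleGraph α) (k : ℕ), 1 ≤ k →
      mCount (cartPow G k) (fun x => 0 ≤ x ∧ x < 1) ≤
        (mCount G (fun x => 0 ≤ x ∧ x < 1)) ^ k) := by
  constructor
  · intro α β _ _ _ _ G H
    exact my_mCount_boxProd G H
  · intro α _ _ G k hk
    induction k with
    | zero => omega
    | succ n ih =>
      by_cases hn : n = 0
      · subst hn
        rw [pow_one, ← my_mCount_iso (cartPow G 1) G (Equiv.funUnique (Fin 1) α)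
          (my_cartPow_one G)]
      · have hn1 : 1 ≤ n := by omega
        have hiso := my_mCount_iso (cartPow G (n + 1)) (G.boxProd (cartPow G n))
          ((Fin.consEquiv fun _ => α).symm) (my_cartPow_succ G n) (fun x => 0 ≤ x ∧ x < 1)
        calc mCount (cartPow G (n + 1)) (fun x => 0 ≤ x ∧ x < 1)
            = mCount (G.boxProd (cartPow G n)) (fun x => 0 ≤ x ∧ x < 1) := hiso.symm
          _ ≤ mCount G (fun x => 0 ≤ x ∧ x < 1) * mCount (cartPow G n) (fun x => 0 ≤ x ∧ x < 1) :=
              my_mCount_boxProd G (cartPow G n)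
          _ ≤ mCount G (fun x => 0 ≤ x ∧ x < 1) * (mCount G (fun x => 0 ≤ x ∧ x < 1)) ^ n :=
              Nat.mul_le_mul_left _ (ih hn1)
          _ = (mCount G (fun x => 0 ≤ x ∧ x < 1)) ^ (n + 1) := (pow_succ' _ _).symm
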